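/- Let v, w ∈ ℂ⁶ be nonzero vectors such that w is not a scalar multiple of v and w is not a scalar multiple of ι(v). Then there exists a homogeneous polynomial f ∈ ℂ[X₀,…,X₅] of degree 2 of the form f = c·X₀² + q, with c ∈ ℂ and q a homogeneous quadratic in the variables X₁,…,X₅ only, such that f(v) = 0 and f(w) ≠ 0. -/

import Mathlib

open MvPolynomial

/-- The linear involution ι of ℂ⁶ sending (x₀,x₁,…,x₅) to (-x₀,x₁,…,x₅). -/
def iotaInv (x : Fin 6 → ℂ) : Fin 6 → ℂ := fun i => if i = 0 then -x 0 else x i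

private lemma degX0 (i : Fin 6) (hi : i ≠ 0) :
    degreeOf (0 : Fin 6) (X i : MvPolynomial (Fin 6) ℂ) = 0 := by
  rw [degreeOf_X]
  simp [Ne.symm hi]

private lemma degMul0 {p q : MvPolynomial (Fin 6) ℂ} (hp : degreeOf 0 p = 0)
    (hq : degreeOf 0 q = 0) : degreeOf (0 : Fin 6) (p * q) = 0 :=
  Nat.le_zero.mp <| (degreeOf_mul_le 0 p q).trans (by rw [hp, hq])

private lemma degAdd0 {p q : MvPolynomial (Fin 6) ℂ} (hp : degreeOf 0 p = 0)
    (hq : degreeOf 0 q = 0) : degreeOf (0 : Fin 6) (p + q) = 0 :=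
  Nat.le_zero.mp <| (degreeOf_add_le 0 p q).trans (by rw [hp, hq]; simp)

private lemma degSub0 {p q : MvPolynomial (Fin 6) ℂ} (hp : degreeOf 0 p = 0)
    (hq : degreeOf 0 q = 0) : degreeOf (0 : Fin 6) (p - q) = 0 := by
  rw [sub_eq_add_neg]
  refine degAdd0 hp ?_
  have : -q = C (-1 : ℂ) * q := by ring_nf; simp [neg_eq_iff_eq_neg]
  rw [this]
  exact degMul0 (degreeOf_C _ _) hq

private lemma degPow20 {p : MvPolynomial (Fin 6) ℂ} (hp : degreeOf 0 p = 0) :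
    degreeOf (0 : Fin 6) (p ^ 2) = 0 := by
  rw [sq]; exact degMul0 hp hp

private lemma homX2 (i : Fin 6) :
    (X i ^ 2 : MvPolynomial (Fin 6) ℂ).IsHomogeneous 2 := by
  simpa using (isHomogeneous_X ℂ i).pow 2

/-- If v, w ∈ ℂ⁶ are nonzero, w is not a scalar multiple of v and not a scalar multiple
of ι(v), then there is an invariant quadric f = c·X₀² + q(X₁,…,X₅) with f(v) = 0 and
f(w) ≠ 0. -/
theorem separating_invariant_quadric (v w : Fin 6 → ℂ) (hv : v ≠ 0) (hw : w ≠ 0)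
    (hwv : ∀ c : ℂ, w ≠ c • v) (hwiv : ∀ c : ℂ, w ≠ c • iotaInv v) :
    ∃ f : MvPolynomial (Fin 6) ℂ,
      (∃ (c : ℂ) (q : MvPolynomial (Fin 6) ℂ),
        q.IsHomogeneous 2 ∧ degreeOf 0 q = 0 ∧ f = C c * X 0 ^ 2 + q) ∧
      eval v f = 0 ∧ eval w f ≠ 0 := by
  by_cases hw' : ∀ i : Fin 6, i ≠ 0 → w i = 0
  · -- w' = 0, so w 0 ≠ 0
    have hw0 : w 0 ≠ 0 := by
      intro h0
      apply hw
      funext i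
      by_cases hi : i = 0
      · simpa [hi] using h0
      · simpa using hw' i hi
    by_cases hv0 : v 0 = 0
    · refine ⟨C 1 * X 0 ^ 2 + 0, ⟨1, 0, isHomogeneous_zero _ _ _, degreeOf_zero _, rfl⟩, ?_, ?_⟩
      · simp [hv0]
      · simp [hw0]
    · -- v 0 ≠ 0; v' must be nonzero since w is not a multiple of v
      have hv' : ∃ j : Fin 6, j ≠ 0 ∧ v j ≠ 0 := by
        by_contra h
        push_neg at h
        apply hwv (w 0 / v 0)
        funext i
        by_cases hi : i = 0
        · subst hi; rw [Pi.smul_apply, smul_eq_mul, div_mul_cancel₀ _ hv0]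
        · simp [hw' i hi, h i hi]
      obtain ⟨j, hj0, hvj⟩ := hv'
      refine ⟨C (v j ^ 2) * X 0 ^ 2 + C (-(v 0 ^ 2)) * X j ^ 2,
        ⟨v j ^ 2, C (-(v 0 ^ 2)) * X j ^ 2,
          (isHomogeneous_C _ _).mul (homX2 j),
          degMul0 (degreeOf_C _ _) (degPow20 (degX0 j hj0)), rfl⟩, ?_, ?_⟩
      · simp; ring
      · simp only [eval_add, eval_mul, eval_C, eval_X, eval_pow, map_neg]
        simp [hw' j hj0, hvj, hw0]
  · push_neg at hw'
    obtain ⟨k, hk0, hwk⟩ := hw'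
    by_cases h2 : ∃ i j : Fin 6, i ≠ 0 ∧ j ≠ 0 ∧ v j * w i - v i * w j ≠ 0
    · obtain ⟨i, j, hi0, hj0, hij⟩ := h2
      refine ⟨C 0 * X 0 ^ 2 + (C (v j) * X i - C (v i) * X j) * X k,
        ⟨0, (C (v j) * X i - C (v i) * X j) * X k,
          (((isHomogeneous_C _ _).mul (isHomogeneous_X ℂ i)).sub
            ((isHomogeneous_C _ _).mul (isHomogeneous_X ℂ j))).mul (isHomogeneous_X ℂ k),
          degMul0 (degSub0 (degMul0 (degreeOf_C _ _) (degX0 i hi0))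
            (degMul0 (degreeOf_C _ _) (degX0 j hj0))) (degX0 k hk0), rfl⟩, ?_, ?_⟩
      · simp only [eval_add, eval_mul, eval_sub, eval_C, eval_X, eval_pow, map_zero]; ring
      · simp only [eval_add, eval_mul, eval_sub, eval_C, eval_X, eval_pow, map_zero, zero_mul,
          zero_add]
        exact mul_ne_zero hij hwk
    · push_neg at h2
      by_cases hv' : ∀ i : Fin 6, i ≠ 0 → v i = 0
      · -- v' = 0, use X k ^ 2
        refine ⟨C 0 * X 0 ^ 2 + X k ^ 2, ⟨0, X k ^ 2, homX2 k, degPow20 (degX0 k hk0), rfl⟩,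
          ?_, ?_⟩
        · simp [hv' k hk0]
        · simp [hwk]
      · push_neg at hv'
        obtain ⟨j, hj0, hvj⟩ := hv'
        set c := w j / v j with hc
        have hprop : ∀ i : Fin 6, i ≠ 0 → w i = c * v i := by
          intro i hi
          have := h2 i j hi hj0
          have h' : v j * w i = v i * w j := by linear_combination this
          rw [hc, div_mul_eq_mul_div, eq_div_iff hvj]
          linear_combination h'
        have hw0ne : w 0 ≠ c * v 0 := by
          intro h0
          apply hwv c
          funext i
          by_cases hi : i = 0
          · subst hi; simpa using h0
          · simpa using hprop i hi
        have hw0ne' : w 0 ≠ -(c * v 0) := by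
          intro h0
          apply hwiv c
          funext i
          by_cases hi : i = 0
          · subst hi; simp [iotaInv]; linear_combination h0
          · simp [iotaInv, hi]; exact hprop i hi
        have hsq : w 0 ^ 2 - c ^ 2 * v 0 ^ 2 ≠ 0 := by
          intro h
          have : (w 0 - c * v 0) * (w 0 + c * v 0) = 0 := by linear_combination h
          rcases mul_eq_zero.mp this with h' | h'
          · exact hw0ne (by linear_combination h')
          · exact hw0ne' (by linear_combination h')
        refine ⟨C (v j ^ 2) * X 0 ^ 2 + C (-(v 0 ^ 2)) * X j ^ 2,
          ⟨v j ^ 2, C (-(v 0 ^ 2)) * X j ^ 2,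
            (isHomogeneous_C _ _).mul (homX2 j),
            degMul0 (degreeOf_C _ _) (degPow20 (degX0 j hj0)), rfl⟩, ?_, ?_⟩
        · simp; ring
        · simp only [eval_add, eval_mul, eval_C, eval_X, eval_pow, map_neg]
          have hwj : w j = c * v j := hprop j hj0
          intro h
          apply hsq
          have hvj2 : (v j : ℂ) ^ 2 ≠ 0 := pow_ne_zero 2 hvj
          field_simp at h ⊢
          rw [hwj] at h
          have : v j ^ 2 * (w 0 ^ 2 - c ^ 2 * v 0 ^ 2) = 0 := by linear_combination h
          rcases mul_eq_zero.mp this with h' | h'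
          · exact absurd h' hvj2
          · linear_combination h'
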